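/- A permutation σ of [k] is weakly consecutive if and only if for every m ∈ [k], the set S_m = {i ∈ [k] : i ≡ σ⁻¹(m) (mod m)} equals the set T_m = {i ∈ [k] : m divides σ(i)}. -/

import Mathlib

/-- A permutation `σ` of `[k] = {1,…,k}` is weakly consecutive if for all
`i, j ∈ [k]` and integers `m`, whenever `m ∣ σ i` and `m ∣ (i - j)`, then `m ∣ σ j`. -/
def IsWCS (k : ℕ) (σ : ℕ → ℕ) : Prop :=
  Set.BijOn σ (Set.Icc 1 k) (Set.Icc 1 k) ∧
  ∀ (m : ℕ) (i j : ℕ), i ∈ Set.Icc 1 k → j ∈ Set.Icc 1 k →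
    m ∣ σ i → (m : ℤ) ∣ ((i : ℤ) - (j : ℤ)) → m ∣ σ j

/-- Each residue class mod `m` in `[1,k]` has at least `k/m` elements. -/
lemma class_card_ge (k m r : ℕ) (hm : 1 ≤ m) (hr : r < m) :
    k / m ≤ ((Finset.Icc 1 k).filter (fun x => x % m = r)).card := by
  classical
  set r' : ℕ := if r = 0 then m else r with hr'def
  have hr'1 : 1 ≤ r' := by
    by_cases h : r = 0 <;> simp [hr'def, h] <;> omega
  have hr'le : r' ≤ m := by
    by_cases h : r = 0 <;> simp [hr'def, h] <;> omega
  have hr'mod : r' % m = r := by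
    by_cases h : r = 0
    · simp [hr'def, h]
    · simp [hr'def, h, Nat.mod_eq_of_lt hr]
  have := Finset.card_le_card_of_injOn (f := fun t => t * m + r')
    (s := Finset.range (k / m))
    (t := (Finset.Icc 1 k).filter (fun x => x % m = r)) ?_ ?_
  · simpa using this
  · intro t ht
    simp only [Finset.mem_coe, Finset.mem_range] at ht
    simp only [Finset.mem_coe, Finset.mem_filter, Finset.mem_Icc]
    refine ⟨⟨by omega, ?_⟩, ?_⟩
    · have h1 : t + 1 ≤ k / m := ht
      have h2 : (t + 1) * m ≤ (k / m) * m := Nat.mul_le_mul_right m h1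
      have h3 : (k / m) * m ≤ k := Nat.div_mul_le_self k m
      nlinarith
    · rw [Nat.add_comm, Nat.add_mul_mod_self_right, hr'mod]
  · intro a _ b _ hab
    simp only at hab
    have : a * m = b * m := by omega
    exact Nat.eq_of_mul_eq_mul_right (by omega) this

theorem wcs_iff_slices (k : ℕ) (σ : ℕ → ℕ)
    (hσ : Set.BijOn σ (Set.Icc 1 k) (Set.Icc 1 k)) :
    (∀ (m : ℕ) (i j : ℕ), i ∈ Set.Icc 1 k → j ∈ Set.Icc 1 k →
        m ∣ σ i → (m : ℤ) ∣ ((i : ℤ) - (j : ℤ)) → m ∣ σ j) ↔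
    (∀ m im : ℕ, m ∈ Set.Icc 1 k → im ∈ Set.Icc 1 k → σ im = m →
      {i ∈ Set.Icc 1 k | i ≡ im [MOD m]} = {i ∈ Set.Icc 1 k | m ∣ σ i}) := by
  classical
  constructor
  · intro h m im hm him hσim
    obtain ⟨hm1, hmk⟩ := Set.mem_Icc.mp hm
    ext i
    simp only [Set.mem_setOf_eq]
    constructor
    · rintro ⟨hi, hmod⟩
      refine ⟨hi, ?_⟩
      have hdvd : (m : ℤ) ∣ ((im : ℤ) - (i : ℤ)) := (Nat.modEq_iff_dvd).mp hmod
      exact h m im i him hi (hσim ▸ dvd_refl m) hdvd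
    · rintro ⟨hi, hdvd⟩
      refine ⟨hi, ?_⟩
      -- counting argument
      by_contra hne
      have hne' : i % m ≠ im % m := hne
      set C1 := (Finset.Icc 1 k).filter (fun x => x % m = i % m) with hC1
      set C2 := (Finset.Icc 1 k).filter (fun x => x % m = im % m) with hC2
      set M := (Finset.Icc 1 k).filter (fun x => m ∣ x) with hM
      have hMcard : M.card = k / m := by
        have : (Finset.Icc 1 k) = Finset.Ioc 0 k := by
          ext x; simp [Nat.lt_iff_add_one_le]
        rw [hM, this]
        exact Nat.Ioc_filter_dvd_card_eq_div k m
      have hdisj : Disjoint C1 C2 := by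
        rw [Finset.disjoint_left]
        intro a ha1 ha2
        simp only [hC1, hC2, Finset.mem_filter] at ha1 ha2
        exact hne' (ha1.2 ▸ ha2.2 ▸ rfl)
      have hmpos : 0 < m := hm1
      -- σ maps C1 ∪ C2 into M
      have hmap : ∀ x ∈ C1 ∪ C2, σ x ∈ M := by
        intro x hx
        have hxIcc : x ∈ Finset.Icc 1 k := by
          rcases Finset.mem_union.mp hx with hx | hx <;>
            exact (Finset.mem_filter.mp hx).1
        have hxIcc' : x ∈ Set.Icc 1 k := by
          simpa using Finset.mem_Icc.mp hxIcc
        have hσx : σ x ∈ Set.Icc 1 k := hσ.mapsTo hxIcc'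
        have hdvdx : m ∣ σ x := by
          rcases Finset.mem_union.mp hx with hx | hx
          · have hmod : x % m = i % m := (Finset.mem_filter.mp hx).2
            have : (m : ℤ) ∣ ((i : ℤ) - (x : ℤ)) :=
              (Nat.modEq_iff_dvd).mp hmod
            exact h m i x hi hxIcc' hdvd this
          · have hmod : x % m = im % m := (Finset.mem_filter.mp hx).2
            have : (m : ℤ) ∣ ((im : ℤ) - (x : ℤ)) :=
              (Nat.modEq_iff_dvd).mp hmod
            exact h m im x him hxIcc' (hσim ▸ dvd_refl m) this
        simp only [hM, Finset.mem_filter, Finset.mem_Icc]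
        exact ⟨by simpa using Set.mem_Icc.mp hσx, hdvdx⟩
      have hinj : Set.InjOn σ ((C1 ∪ C2 : Finset ℕ) : Set ℕ) := by
        apply hσ.injOn.mono
        intro x hx
        simp only [Finset.coe_union, Set.mem_union] at hx
        rcases hx with hx | hx <;>
        · have := (Finset.mem_filter.mp hx).1
          simpa using Finset.mem_Icc.mp this
      have hcard1 : (C1 ∪ C2).card = ((C1 ∪ C2).image σ).card :=
        (Finset.card_image_of_injOn hinj).symm
      have hsub : (C1 ∪ C2).image σ ⊆ M := by
        intro y hy
        obtain ⟨x, hx, rfl⟩ := Finset.mem_image.mp hy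
        exact hmap x hx
      have hle : (C1 ∪ C2).card ≤ k / m := by
        rw [hcard1, ← hMcard]
        exact Finset.card_le_card hsub
      have hunion : (C1 ∪ C2).card = C1.card + C2.card :=
        Finset.card_union_of_disjoint hdisj
      have hC1ge : k / m ≤ C1.card := class_card_ge k m (i % m) hm1 (Nat.mod_lt _ hmpos)
      have hC2ge : k / m ≤ C2.card := class_card_ge k m (im % m) hm1 (Nat.mod_lt _ hmpos)
      have hkm : 1 ≤ k / m := (Nat.one_le_div_iff hmpos).mpr hmk
      omega
  · intro heq m i j hi hj hdvd hij
    have hσi : σ i ∈ Set.Icc 1 k := hσ.mapsTo hi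
    obtain ⟨hσi1, hσik⟩ := Set.mem_Icc.mp hσi
    have hm0 : m ≠ 0 := by
      rintro rfl
      simp only [Nat.zero_dvd] at hdvd
      omega
    have hmk : m ≤ k := le_trans (Nat.le_of_dvd (by omega) hdvd) hσik
    have hmIcc : m ∈ Set.Icc 1 k := Set.mem_Icc.mpr ⟨by omega, hmk⟩
    obtain ⟨im, himIcc, hσim⟩ := hσ.surjOn hmIcc
    have hset := heq m im hmIcc himIcc hσim
    have hiS : i ∈ {i ∈ Set.Icc 1 k | i ≡ im [MOD m]} := by
      rw [hset]; exact ⟨hi, hdvd⟩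
    have hiMod : i ≡ im [MOD m] := hiS.2
    have hjMod : j ≡ i [MOD m] := (Nat.modEq_iff_dvd).mpr hij
    have hjS : j ∈ {i ∈ Set.Icc 1 k | i ≡ im [MOD m]} := ⟨hj, hjMod.trans hiMod⟩
    rw [hset] at hjS
    exact hjS.2
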